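/- Let E(n, k₁,...,k_d) = E[Π_{i=1}^d (X[n,i])_{k_i}] denote the joint factorial moments of the numbers X[n,i] of degree-i vertices in level 1 of the uniform recursive tree after n steps. Then these satisfy the recursion (n)_K · E(n+1, k₁,...,k_d) = (n-1)_K · E(n, k₁,...,k_d) + (n-1)_{K-1} · Σ_{j=1}^d k_j · E(n, k₁,...,k_{j-1}+1, k_j - 1,...,k_d), where K = k₁ + ... + k_d and (·)_m is the falling factorial (with the convention that the j = 1 term is k₁·E(n, k₁-1, k₂,...,k_d)). -/

import Mathlib

open MeasureTheory ProbabilityTheory Filter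

/-- Depth (level) of a vertex in the recursive tree with parent function `f`
(vertex `j ≥ 1` has parent `f j`, intended to satisfy `f j < j`). -/
def treeDepth (f : ℕ → ℕ) : ℕ → ℕ
  | 0 => 0
  | n + 1 => treeDepth f (min (f (n + 1)) n) + 1
  decreasing_by exact Nat.lt_succ_of_le (min_le_right _ _)

/-- Degree of vertex `i` in the recursive tree on vertices `0, …, n` with parent
function `f`: the number of children of `i` plus one for the edge to the parent
of `i` when `i ≠ 0`. -/
def treeDeg (f : ℕ → ℕ) (n i : ℕ) : ℕ :=
  ((Finset.Icc (i + 1) n).filter fun j => f j = i).card + (if i = 0 then 0 else 1)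

/-- The set of vertices at distance `k` from the root among vertices `0, …, n`. -/
def level (f : ℕ → ℕ) (n k : ℕ) : Finset ℕ :=
  (Finset.range (n + 1)).filter fun i => treeDepth f i = k

/-- `X[n,d]`: the number of vertices of degree `d` at distance 1 from the root
in the uniform recursive tree after `n` steps, i.e. on vertices `0, …, n-1`. -/
def levelOneDegCount (f : ℕ → ℕ) (n d : ℕ) : ℕ :=
  ((Finset.Icc 1 (n - 1)).filter fun i =>
    treeDepth f i = 1 ∧ treeDeg f (n - 1) i = d).card

/-- The joint factorial moment `E(n, k₁, …, k_d) = E[Π_{i=1}^d (X[n,i])_{k_i}]`. -/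
noncomputable def jointFactMoment {Ω : Type*} [MeasurableSpace Ω] (μ : Measure Ω)
    (F : ℕ → Ω → ℕ) (n d : ℕ) (k : ℕ → ℕ) : ℝ :=
  ∫ ω, ∏ i ∈ Finset.Icc 1 d,
    (descPochhammer ℝ (k i)).eval ((levelOneDegCount (fun j => F j ω) n i : ℕ) : ℝ) ∂μ

/-- Recursion for the joint factorial moments:
`(n)_K·E(n+1,k) = (n-1)_K·E(n,k) + (n-1)_{K-1}·Σ_j k_j·E(n, …, k_{j-1}+1, k_j-1, …)`,
where `K = k₁ + ⋯ + k_d` (for `j = 1` the shifted argument is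
`(k₁-1, k₂, …, k_d)`: the update at index `0` does not affect the moment). -/
-- Pochhammer lemmas
lemma desc_eval_zero (k : ℕ) : (descPochhammer ℝ (k+1)).eval 0 = 0 := by
  rw [descPochhammer_succ_left]
  simp

lemma desc_add_one' (k : ℕ) (x : ℝ) :
    (descPochhammer ℝ (k+1)).eval (x+1) =
      (descPochhammer ℝ (k+1)).eval x + (k+1) * (descPochhammer ℝ k).eval x := by
  induction k with
  | zero => simp
  | succ k ih =>
    have h1 := descPochhammer_succ_eval k x
    have h2 := descPochhammer_succ_eval (k+1) x
    rw [descPochhammer_succ_eval _ (x+1), ih]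
    push_cast at h1 h2 ⊢
    linear_combination (-((k:ℝ)+1)) * h1 - h2

lemma desc_add_one (k : ℕ) (x : ℝ) :
    (descPochhammer ℝ k).eval (x+1) =
      (descPochhammer ℝ k).eval x + k * (descPochhammer ℝ (k-1)).eval x := by
  cases k with
  | zero => simp
  | succ k => simpa using desc_add_one' k x

lemma desc_mul_sub_one (y k : ℕ) :
    (y : ℝ) * (descPochhammer ℝ k).eval ((y - 1 : ℕ) : ℝ) =
      (descPochhammer ℝ (k+1)).eval (y : ℝ) := by
  cases y with
  | zero => simp [desc_eval_zero]
  | succ m =>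
    rw [descPochhammer_succ_left]
    simp [Polynomial.eval_comp]

lemma desc_succ_right (k : ℕ) (x : ℝ) :
    (descPochhammer ℝ (k+1)).eval x = (descPochhammer ℝ k).eval x * (x - k) :=
  descPochhammer_succ_eval k x

lemma treeDepth_congr (f g : ℕ → ℕ) :
    ∀ i, (∀ j, 1 ≤ j → j ≤ i → f j = g j) → treeDepth f i = treeDepth g i := by
  intro i
  induction i using Nat.strong_induction_on with
  | _ i ih =>
    match i with
    | 0 => intro _; simp [treeDepth]
    | Nat.succ m =>
      intro h
      rw [treeDepth, treeDepth, h (m+1) (by omega) le_rfl]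
      exact congrArg (· + 1) (ih _ (Nat.lt_succ_of_le (min_le_right _ _))
        (fun j h1 hj => h j h1 (le_trans hj (le_trans (min_le_right _ _) (Nat.le_succ m)))))

lemma treeDeg_congr (f g : ℕ → ℕ) (N i : ℕ) (h : ∀ j, 1 ≤ j → j ≤ N → f j = g j) :
    treeDeg f N i = treeDeg g N i := by
  unfold treeDeg
  have heq : Finset.filter (fun j => f j = i) (Finset.Icc (i+1) N)
      = Finset.filter (fun j => g j = i) (Finset.Icc (i+1) N) := by
    apply Finset.filter_congr
    intro j hj
    simp only [Finset.mem_Icc] at hj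
    rw [h j (by omega) hj.2]
  rw [heq]

lemma lev_congr (f g : ℕ → ℕ) (N i : ℕ) (h : ∀ j, 1 ≤ j → j ≤ N - 1 → f j = g j) :
    levelOneDegCount f N i = levelOneDegCount g N i := by
  unfold levelOneDegCount
  have heq : Finset.filter (fun v => treeDepth f v = 1 ∧ treeDeg f (N-1) v = i) (Finset.Icc 1 (N-1))
      = Finset.filter (fun v => treeDepth g v = 1 ∧ treeDeg g (N-1) v = i) (Finset.Icc 1 (N-1)) := by
    apply Finset.filter_congr
    intro v hv
    simp only [Finset.mem_Icc] at hv
    rw [treeDepth_congr f g v (fun j h1 h2 => h j h1 (by omega)),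
      treeDeg_congr f g (N-1) v (fun j h1 h2 => h j h1 (by omega))]
  rw [heq]

lemma treeDeg_pos (f : ℕ → ℕ) (N i : ℕ) (hi : 1 ≤ i) : 1 ≤ treeDeg f N i := by
  unfold treeDeg
  rw [if_neg (by omega)]
  omega

lemma treeDeg_le (f : ℕ → ℕ) (N i : ℕ) : treeDeg f N i ≤ N - i + 1 := by
  unfold treeDeg
  have h := Finset.card_filter_le (Finset.Icc (i+1) N) (fun j => f j = i)
  rw [Nat.card_Icc] at h
  split_ifs <;> omega

lemma lev_le (f : ℕ → ℕ) (N i : ℕ) : levelOneDegCount f N i ≤ N - 1 := by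
  unfold levelOneDegCount
  have h := Finset.card_filter_le (Finset.Icc 1 (N-1))
    (fun v => treeDepth f v = 1 ∧ treeDeg f (N - 1) v = i)
  rw [Nat.card_Icc] at h
  omega

lemma desc_succ_left_eval (k : ℕ) (x : ℝ) :
    (descPochhammer ℝ (k+1)).eval x = x * (descPochhammer ℝ k).eval (x - 1) := by
  rw [descPochhammer_succ_left]
  simp [Polynomial.eval_comp]

lemma desc_abs_le (k : ℕ) (x : ℝ) : |(descPochhammer ℝ k).eval x| ≤ (|x| + k)^k := by
  induction k with
  | zero => simp
  | succ k ih =>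
    rw [descPochhammer_succ_eval, abs_mul]
    have h1 : |x - (k:ℕ)| ≤ |x| + (k:ℝ) + 1 := by
      calc |x - (k:ℕ)| ≤ |x| + |((k:ℕ):ℝ)| := abs_sub _ _
        _ ≤ |x| + (k:ℝ) + 1 := by rw [abs_of_nonneg (show (0:ℝ) ≤ ((k:ℕ):ℝ) from Nat.cast_nonneg k)]; norm_num
    have h2 : (|x| + (k:ℝ))^k ≤ (|x| + ((k:ℕ):ℝ) + 1)^k := by
      apply pow_le_pow_left₀ (by positivity)
      norm_num
    calc |(descPochhammer ℝ k).eval x| * |x - (k:ℕ)|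
        ≤ (|x| + (k:ℝ))^k * (|x| + (k:ℝ) + 1) := by
          apply mul_le_mul ih h1 (abs_nonneg _) (by positivity)
      _ ≤ (|x| + (k:ℝ) + 1)^k * (|x| + (k:ℝ) + 1) := by
          apply mul_le_mul_of_nonneg_right h2 (by positivity)
      _ = (|x| + (k:ℝ) + 1)^(k+1) := by ring
      _ = (|x| + ((k:ℕ)+1:ℕ))^(k+1) := by push_cast; ring_nf

lemma treeDepth_eq_zero_iff (f : ℕ → ℕ) (i : ℕ) : treeDepth f i = 0 ↔ i = 0 := by
  cases i with
  | zero => simp [treeDepth]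
  | succ m => rw [treeDepth]; simp

lemma treeDepth_update (f : ℕ → ℕ) (n m i : ℕ) (hi : i < n) :
    treeDepth (Function.update f n m) i = treeDepth f i := by
  refine (treeDepth_congr _ _ i fun j h1 hj => ?_).symm
  rw [Function.update_of_ne (by omega)]

lemma treeDepth_update_self (f : ℕ → ℕ) (n m : ℕ) (hn : 1 ≤ n) (hm : m < n) :
    treeDepth (Function.update f n m) n = treeDepth f m + 1 := by
  obtain ⟨p, rfl⟩ : ∃ p, n = p + 1 := ⟨n - 1, by omega⟩
  rw [treeDepth, Function.update_self]
  have : min m p = m := by omega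
  rw [this, treeDepth_update f _ m m (by omega)]

lemma treeDeg_update (f : ℕ → ℕ) (n m i : ℕ) (hn : 1 ≤ n) (hi : i < n) :
    treeDeg (Function.update f n m) n i = treeDeg f (n-1) i + (if m = i then 1 else 0) := by
  unfold treeDeg
  have hIcc : Finset.Icc (i+1) n = insert n (Finset.Icc (i+1) (n-1)) := by
    ext j; simp only [Finset.mem_Icc, Finset.mem_insert]; omega
  rw [hIcc, Finset.filter_insert]
  have hfil : (Finset.Icc (i+1) (n-1)).filter (fun j => Function.update f n m j = i)
      = (Finset.Icc (i+1) (n-1)).filter (fun j => f j = i) := by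
    apply Finset.filter_congr
    intro j hj
    simp only [Finset.mem_Icc] at hj
    rw [Function.update_of_ne (by omega)]
  have hnot : n ∉ (Finset.Icc (i+1) (n-1)).filter (fun j => Function.update f n m j = i) := by
    simp only [Finset.mem_filter, Finset.mem_Icc]
    omega
  by_cases hmi : m = i
  · rw [if_pos (by rw [Function.update_self]; exact hmi),
      Finset.card_insert_of_notMem hnot, hfil, if_pos hmi]
    omega
  · rw [if_neg (by rw [Function.update_self]; exact hmi), hfil]
    simp [hmi]

lemma treeDeg_update_self (f : ℕ → ℕ) (n m : ℕ) (hn : 1 ≤ n) :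
    treeDeg (Function.update f n m) n n = 1 := by
  unfold treeDeg
  rw [Finset.Icc_eq_empty (by omega)]
  simp
  omega

section
variable (f : ℕ → ℕ) (n m : ℕ)

lemma lev_update (hn : 1 ≤ n) (hm : m < n) (i : ℕ) :
    levelOneDegCount (Function.update f n m) (n+1) i =
      (if m = 0 ∧ i = 1 then 1 else 0) +
      ∑ v ∈ Finset.Icc 1 (n-1),
        (if treeDepth f v = 1 ∧ treeDeg f (n-1) v + (if m = v then 1 else 0) = i
         then 1 else 0) := by
  unfold levelOneDegCount
  have h1 : n + 1 - 1 = n := rfl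
  rw [h1]
  have hIcc : Finset.Icc 1 n = insert n (Finset.Icc 1 (n-1)) := by
    ext j; simp only [Finset.mem_Icc, Finset.mem_insert]; omega
  rw [hIcc, Finset.filter_insert]
  have hcondn : (treeDepth (Function.update f n m) n = 1 ∧
      treeDeg (Function.update f n m) n n = i) ↔ (m = 0 ∧ i = 1) := by
    rw [treeDepth_update_self f n m hn hm, treeDeg_update_self f n m hn]
    constructor
    · rintro ⟨h2, h3⟩
      exact ⟨(treeDepth_eq_zero_iff f m).mp (by omega), h3.symm⟩
    · rintro ⟨h2, h3⟩
      subst h2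
      rw [(treeDepth_eq_zero_iff f 0).mpr rfl]
      omega
  have hfil : (Finset.Icc 1 (n-1)).filter
        (fun v => treeDepth (Function.update f n m) v = 1 ∧
          treeDeg (Function.update f n m) n v = i)
      = (Finset.Icc 1 (n-1)).filter
        (fun v => treeDepth f v = 1 ∧ treeDeg f (n-1) v + (if m = v then 1 else 0) = i) := by
    apply Finset.filter_congr
    intro v hv
    simp only [Finset.mem_Icc] at hv
    rw [treeDepth_update f n m v (by omega), treeDeg_update f n m v hn (by omega)]
  by_cases hc : m = 0 ∧ i = 1
  · rw [if_pos (hcondn.mpr hc), if_pos hc,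
      Finset.card_insert_of_notMem (by simp only [Finset.mem_filter, Finset.mem_Icc]; omega),
      hfil, Finset.card_filter]
    omega
  · rw [if_neg (fun h => hc (hcondn.mp h)), if_neg hc, hfil, Finset.card_filter]
    omega

lemma lev_update_zero (hn : 1 ≤ n) (i : ℕ) :
    levelOneDegCount (Function.update f n 0) (n+1) i =
      levelOneDegCount f n i + (if i = 1 then 1 else 0) := by
  rw [lev_update f n 0 hn (by omega) i]
  unfold levelOneDegCount
  rw [Finset.card_filter]
  have : ∀ v ∈ Finset.Icc 1 (n-1),
      (if treeDepth f v = 1 ∧ treeDeg f (n-1) v + (if 0 = v then 1 else 0) = i then 1 else 0)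
        = (if treeDepth f v = 1 ∧ treeDeg f (n-1) v = i then (1:ℕ) else 0) := by
    intro v hv
    simp only [Finset.mem_Icc] at hv
    rw [if_neg (show ¬(0 = v) by omega)]
    simp
  rw [Finset.sum_congr rfl this]
  by_cases hi : i = 1 <;> simp [hi] <;> omega

lemma lev_update_lvl1 (hn : 1 ≤ n) (hm : m < n) (hm1 : 1 ≤ m)
    (hdep : treeDepth f m = 1) (i : ℕ) :
    levelOneDegCount (Function.update f n m) (n+1) i
        + (if i = treeDeg f (n-1) m then 1 else 0) =
      levelOneDegCount f n i + (if i = treeDeg f (n-1) m + 1 then 1 else 0) := by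
  rw [lev_update f n m hn hm i]
  unfold levelOneDegCount
  rw [Finset.card_filter]
  have hmem : m ∈ Finset.Icc 1 (n-1) := by simp only [Finset.mem_Icc]; omega
  rw [← Finset.add_sum_erase _ _ hmem, ← Finset.add_sum_erase _ _ hmem]
  have herase : ∀ v ∈ (Finset.Icc 1 (n-1)).erase m,
      (if treeDepth f v = 1 ∧ treeDeg f (n-1) v + (if m = v then 1 else 0) = i then 1 else 0)
        = (if treeDepth f v = 1 ∧ treeDeg f (n-1) v = i then (1:ℕ) else 0) := by
    intro v hv
    have : m ≠ v := fun h => (Finset.mem_erase.mp hv).1 h.symm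
    rw [if_neg this]
    simp
  rw [Finset.sum_congr rfl herase, if_neg (by omega), if_pos rfl]
  simp only [hdep, true_and]
  split_ifs <;> omega

lemma lev_update_other (hn : 1 ≤ n) (hm : m < n) (hm1 : 1 ≤ m)
    (hdep : treeDepth f m ≠ 1) (i : ℕ) :
    levelOneDegCount (Function.update f n m) (n+1) i = levelOneDegCount f n i := by
  rw [lev_update f n m hn hm i]
  unfold levelOneDegCount
  rw [Finset.card_filter]
  rw [if_neg (by omega)]
  have : ∀ v ∈ Finset.Icc 1 (n-1),
      (if treeDepth f v = 1 ∧ treeDeg f (n-1) v + (if m = v then 1 else 0) = i then 1 else 0)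
        = (if treeDepth f v = 1 ∧ treeDeg f (n-1) v = i then (1:ℕ) else 0) := by
    intro v hv
    by_cases hmv : m = v
    · subst hmv
      rw [if_neg (by tauto), if_neg (by tauto)]
    · rw [if_neg hmv]
      simp
  rw [Finset.sum_congr rfl this]
  omega
end

noncomputable def PP (d : ℕ) (κ c : ℕ → ℕ) : ℝ :=
  ∏ i ∈ Finset.Icc 1 d, (descPochhammer ℝ (κ i)).eval ((c i : ℕ) : ℝ)

def kshift (k : ℕ → ℕ) (j : ℕ) : ℕ → ℕ :=
  Function.update (Function.update k j (k j - 1)) (j - 1) (k (j - 1) + 1)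

lemma kshift_self (k : ℕ → ℕ) (j : ℕ) (hj : 1 ≤ j) : kshift k j j = k j - 1 := by
  unfold kshift
  rw [Function.update_of_ne (by omega), Function.update_self]

lemma kshift_pred (k : ℕ → ℕ) (j : ℕ) : kshift k j (j-1) = k (j-1) + 1 := by
  unfold kshift
  rw [Function.update_self]

lemma kshift_other (k : ℕ → ℕ) (j i : ℕ) (h1 : i ≠ j) (h2 : i ≠ j - 1) :
    kshift k j i = k i := by
  unfold kshift
  rw [Function.update_of_ne h2, Function.update_of_ne h1]

def Zvec (Y : ℕ → ℕ) (D : ℕ) : ℕ → ℕ :=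
  fun i => Y i + (if i = D + 1 then 1 else 0) - (if i = D then 1 else 0)

lemma alg1 (d : ℕ) (hd : 1 ≤ d) (k Y : ℕ → ℕ) :
    PP d k (fun i => Y i + (if i = 1 then 1 else 0)) =
      PP d k Y + (k 1 : ℝ) * PP d (kshift k 1) Y := by
  have h1 : (1:ℕ) ∈ Finset.Icc 1 d := by simp [hd]
  unfold PP
  rw [← Finset.mul_prod_erase _ _ h1,
    ← Finset.mul_prod_erase _ (fun i => (descPochhammer ℝ (k i)).eval ((Y i : ℕ) : ℝ)) h1,
    ← Finset.mul_prod_erase _ (fun i => (descPochhammer ℝ (kshift k 1 i)).eval ((Y i : ℕ) : ℝ)) h1]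
  have hrest : ∀ i ∈ (Finset.Icc 1 d).erase 1,
      (descPochhammer ℝ (k i)).eval (((Y i + (if i = 1 then 1 else 0) : ℕ)) : ℝ)
        = (descPochhammer ℝ (k i)).eval ((Y i : ℕ) : ℝ) := by
    intro i hi
    have : i ≠ 1 := (Finset.mem_erase.mp hi).1
    simp [this]
  have hrest2 : ∀ i ∈ (Finset.Icc 1 d).erase 1,
      (descPochhammer ℝ (kshift k 1 i)).eval ((Y i : ℕ) : ℝ)
        = (descPochhammer ℝ (k i)).eval ((Y i : ℕ) : ℝ) := by
    intro i hi
    simp only [Finset.mem_erase, Finset.mem_Icc] at hi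
    rw [kshift_other k 1 i hi.1 (by omega)]
  rw [Finset.prod_congr rfl hrest, Finset.prod_congr rfl hrest2]
  have hval : ((Y 1 + (if (1:ℕ) = 1 then 1 else 0) : ℕ) : ℝ) = ((Y 1 : ℕ) : ℝ) + 1 := by
    simp
  rw [hval, desc_add_one (k 1) ((Y 1 : ℕ) : ℝ), kshift_self k 1 le_rfl]
  ring

lemma alg2_core (yD kD k1 : ℕ) (A B P Q P' Q' R : ℝ)
    (h₁ : (yD:ℝ) * A = P') (h₂ : P' = P * ((yD:ℝ) - kD)) (h₃ : B = Q + k1 * Q') :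
    (yD:ℝ) * (A * (B * R)) = ((yD:ℝ) - kD) * (P * (Q * R)) + k1 * (P' * (Q' * R)) := by
  linear_combination (B*R)*h₁ + (Q*R)*h₂ + (P'*R)*h₃

lemma alg2 (d : ℕ) (k Y : ℕ → ℕ) (D : ℕ) (hD1 : 1 ≤ D) (hDd : D + 1 ≤ d) :
    (Y D : ℝ) * PP d k (Zvec Y D) =
      ((Y D : ℝ) - (k D : ℝ)) * PP d k Y + (k (D+1) : ℝ) * PP d (kshift k (D+1)) Y := by
  have hDmem : D ∈ Finset.Icc 1 d := by simp; omega
  have hD1mem : D + 1 ∈ (Finset.Icc 1 d).erase D := by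
    simp only [Finset.mem_erase, Finset.mem_Icc]; omega
  unfold PP
  rw [← Finset.mul_prod_erase _ _ hDmem, ← Finset.mul_prod_erase _ _ hD1mem,
    ← Finset.mul_prod_erase _ (fun i => (descPochhammer ℝ (k i)).eval ((Y i : ℕ) : ℝ)) hDmem,
    ← Finset.mul_prod_erase _ (fun i => (descPochhammer ℝ (k i)).eval ((Y i : ℕ) : ℝ)) hD1mem,
    ← Finset.mul_prod_erase _ (fun i => (descPochhammer ℝ (kshift k (D+1) i)).eval ((Y i : ℕ) : ℝ)) hDmem,
    ← Finset.mul_prod_erase _ (fun i => (descPochhammer ℝ (kshift k (D+1) i)).eval ((Y i : ℕ) : ℝ)) hD1mem]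
  have hrest : ∀ i ∈ ((Finset.Icc 1 d).erase D).erase (D+1),
      (descPochhammer ℝ (k i)).eval ((Zvec Y D i : ℕ) : ℝ)
        = (descPochhammer ℝ (k i)).eval ((Y i : ℕ) : ℝ) := by
    intro i hi
    simp only [Finset.mem_erase, Finset.mem_Icc] at hi
    have : Zvec Y D i = Y i := by unfold Zvec; rw [if_neg hi.1, if_neg hi.2.1]; omega
    rw [this]
  have hrest2 : ∀ i ∈ ((Finset.Icc 1 d).erase D).erase (D+1),
      (descPochhammer ℝ (kshift k (D+1) i)).eval ((Y i : ℕ) : ℝ)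
        = (descPochhammer ℝ (k i)).eval ((Y i : ℕ) : ℝ) := by
    intro i hi
    simp only [Finset.mem_erase, Finset.mem_Icc] at hi
    rw [kshift_other k (D+1) i (by omega) (by omega)]
  rw [Finset.prod_congr rfl hrest, Finset.prod_congr rfl hrest2]
  have hZD : Zvec Y D D = Y D - 1 := by unfold Zvec; rw [if_neg (by omega), if_pos rfl]; omega
  have hZD1 : ((Zvec Y D (D+1) : ℕ) : ℝ) = ((Y (D+1) : ℕ) : ℝ) + 1 := by
    unfold Zvec; rw [if_pos rfl, if_neg (by omega)]; push_cast; ring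
  have hksD : kshift k (D+1) D = k D + 1 := by
    have := kshift_pred k (D+1); simpa using this
  have hksD1 : kshift k (D+1) (D+1) = k (D+1) - 1 := kshift_self k (D+1) (by omega)
  rw [hZD, hZD1, hksD, hksD1]
  exact alg2_core (Y D) (k D) (k (D+1)) _ _ _ _ _ _ _
    (desc_mul_sub_one (Y D) (k D)) (desc_succ_right (k D) ((Y D : ℕ) : ℝ))
    (desc_add_one (k (D+1)) ((Y (D+1) : ℕ) : ℝ))

lemma alg3 (d : ℕ) (hd : 1 ≤ d) (k Y : ℕ → ℕ) :
    (Y d : ℝ) * PP d k (Zvec Y d) = ((Y d : ℝ) - (k d : ℝ)) * PP d k Y := by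
  have hDmem : d ∈ Finset.Icc 1 d := by simp [hd]
  unfold PP
  rw [← Finset.mul_prod_erase _ _ hDmem,
    ← Finset.mul_prod_erase _ (fun i => (descPochhammer ℝ (k i)).eval ((Y i : ℕ) : ℝ)) hDmem]
  have hrest : ∀ i ∈ (Finset.Icc 1 d).erase d,
      (descPochhammer ℝ (k i)).eval ((Zvec Y d i : ℕ) : ℝ)
        = (descPochhammer ℝ (k i)).eval ((Y i : ℕ) : ℝ) := by
    intro i hi
    simp only [Finset.mem_erase, Finset.mem_Icc] at hi
    have : Zvec Y d i = Y i := by unfold Zvec; rw [if_neg (by omega), if_neg hi.1]; omega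
    rw [this]
  rw [Finset.prod_congr rfl hrest]
  have hZD : Zvec Y d d = Y d - 1 := by unfold Zvec; rw [if_neg (by omega), if_pos rfl]; omega
  rw [hZD]
  have h₁ := desc_mul_sub_one (Y d) (k d)
  have h₂ := desc_succ_right (k d) ((Y d : ℕ) : ℝ)
  set R := ∏ i ∈ (Finset.Icc 1 d).erase d, (descPochhammer ℝ (k i)).eval ((Y i : ℕ) : ℝ)
  linear_combination R * h₁ + R * h₂

lemma alg4 (d : ℕ) (k Y : ℕ → ℕ) (D : ℕ) (hDd : d + 1 ≤ D) :
    PP d k (Zvec Y D) = PP d k Y := by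
  unfold PP
  apply Finset.prod_congr rfl
  intro i hi
  simp only [Finset.mem_Icc] at hi
  have : Zvec Y D i = Y i := by unfold Zvec; rw [if_neg (by omega), if_neg (by omega)]; omega
  rw [this]

lemma algsum (n d : ℕ) (hn : 1 ≤ n) (hd : 1 ≤ d) (k Y : ℕ → ℕ) (L : ℕ)
    (hL : (L:ℝ) = ∑ D ∈ Finset.Icc 1 (n+d), (Y D : ℝ)) (hLn : L ≤ n - 1) :
    (PP d k Y + (k 1 : ℝ) * PP d (kshift k 1) Y)
      + (∑ D ∈ Finset.Icc 1 (n+d), (Y D : ℝ) * PP d k (Zvec Y D))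
      + ((n - 1 - L : ℕ) : ℝ) * PP d k Y
    = ((n:ℝ) - ((∑ i ∈ Finset.Icc 1 d, k i : ℕ) : ℝ)) * PP d k Y
      + ∑ j ∈ Finset.Icc 1 d, (k j : ℝ) * PP d (kshift k j) Y := by
  have hsplit : ∀ D ∈ Finset.Icc 1 (n+d),
      (Y D : ℝ) * PP d k (Zvec Y D)
        = (Y D : ℝ) * PP d k Y - (if D ≤ d then (k D : ℝ) * PP d k Y else 0)
          + (if D + 1 ≤ d then (k (D+1) : ℝ) * PP d (kshift k (D+1)) Y else 0) := by
    intro D hD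
    simp only [Finset.mem_Icc] at hD
    by_cases h1 : D + 1 ≤ d
    · rw [if_pos (by omega), if_pos h1]
      have := alg2 d k Y D hD.1 h1
      linarith [this]
    · by_cases h2 : D = d
      · subst h2
        rw [if_pos le_rfl, if_neg h1]
        have := alg3 D hD.1 k Y
        linarith [this]
      · rw [if_neg (by omega), if_neg h1, alg4 d k Y D (by omega)]
        ring
  rw [Finset.sum_congr rfl hsplit]
  rw [Finset.sum_add_distrib, Finset.sum_sub_distrib]
  have e1 : ∑ D ∈ Finset.Icc 1 (n+d), (Y D : ℝ) * PP d k Y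
      = (L : ℝ) * PP d k Y := by
    rw [← Finset.sum_mul, ← hL]
  have e2 : ∑ D ∈ Finset.Icc 1 (n+d), (if D ≤ d then (k D : ℝ) * PP d k Y else 0)
      = ((∑ i ∈ Finset.Icc 1 d, k i : ℕ) : ℝ) * PP d k Y := by
    rw [Finset.sum_ite, Finset.sum_const_zero, add_zero]
    have : (Finset.Icc 1 (n+d)).filter (· ≤ d) = Finset.Icc 1 d := by
      ext j; simp only [Finset.mem_filter, Finset.mem_Icc]; omega
    rw [this, ← Finset.sum_mul]
    push_cast
    ring
  have e3 : ∑ D ∈ Finset.Icc 1 (n+d), (if D + 1 ≤ d then (k (D+1) : ℝ) * PP d (kshift k (D+1)) Y else 0)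
      = ∑ j ∈ Finset.Icc 2 d, (k j : ℝ) * PP d (kshift k j) Y := by
    rw [Finset.sum_ite, Finset.sum_const_zero, add_zero]
    have hfil : (Finset.Icc 1 (n+d)).filter (· + 1 ≤ d) = Finset.Icc 1 (d-1) := by
      ext j; simp only [Finset.mem_filter, Finset.mem_Icc]; omega
    have hmap : Finset.Icc 2 d = (Finset.Icc 1 (d-1)).map
        ⟨(· + 1), add_left_injective 1⟩ := by
      ext j
      simp only [Finset.mem_map, Finset.mem_Icc, Function.Embedding.coeFn_mk]
      constructor
      · intro h; exact ⟨j - 1, by omega, by omega⟩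
      · rintro ⟨a, ha, rfl⟩; omega
    rw [hfil, hmap, Finset.sum_map]
    rfl
  have e4 : ∑ j ∈ Finset.Icc 1 d, (k j : ℝ) * PP d (kshift k j) Y
      = (k 1 : ℝ) * PP d (kshift k 1) Y
        + ∑ j ∈ Finset.Icc 2 d, (k j : ℝ) * PP d (kshift k j) Y := by
    have : Finset.Icc 1 d = insert 1 (Finset.Icc 2 d) := by
      ext j; simp only [Finset.mem_insert, Finset.mem_Icc]; omega
    rw [this, Finset.sum_insert (by simp)]
  have e5 : ((n - 1 - L : ℕ) : ℝ) = (n : ℝ) - 1 - L := by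
    rw [Nat.cast_sub hLn, Nat.cast_sub hn]
    norm_num
  rw [e1, e2, e3, e4, e5]
  ring

lemma pointwise_sum (f : ℕ → ℕ) (n d : ℕ) (hn : 1 ≤ n) (hd : 1 ≤ d) (k : ℕ → ℕ) :
    ∑ m ∈ Finset.range n, PP d k (fun i => levelOneDegCount (Function.update f n m) (n+1) i)
      = ((n:ℝ) - ((∑ i ∈ Finset.Icc 1 d, k i : ℕ) : ℝ)) * PP d k (levelOneDegCount f n)
        + ∑ j ∈ Finset.Icc 1 d, (k j : ℝ) * PP d (kshift k j) (levelOneDegCount f n) := by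
  classical
  set Y : ℕ → ℕ := levelOneDegCount f n with hY
  set B : Finset ℕ := (Finset.Icc 1 (n-1)).filter (fun v => treeDepth f v = 1) with hB
  -- split off m = 0
  have hrange : Finset.range n = insert 0 (Finset.Icc 1 (n-1)) := by
    ext j; simp only [Finset.mem_range, Finset.mem_insert, Finset.mem_Icc]; omega
  rw [hrange, Finset.sum_insert (by simp)]
  -- term at 0
  have h0 : PP d k (fun i => levelOneDegCount (Function.update f n 0) (n+1) i)
      = PP d k Y + (k 1 : ℝ) * PP d (kshift k 1) Y := by
    have hfun : (fun i => levelOneDegCount (Function.update f n 0) (n+1) i)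
        = fun i => Y i + (if i = 1 then 1 else 0) := funext (lev_update_zero f n hn)
    rw [hfun]
    exact alg1 d hd k Y
  rw [h0]
  -- split the rest by depth
  rw [← Finset.sum_filter_add_sum_filter_not (Finset.Icc 1 (n-1))
    (fun v => treeDepth f v = 1)]
  -- non level-1 vertices
  have hother : ∑ m ∈ (Finset.Icc 1 (n-1)).filter (fun v => ¬ treeDepth f v = 1),
      PP d k (fun i => levelOneDegCount (Function.update f n m) (n+1) i)
      = (((Finset.Icc 1 (n-1)).filter (fun v => ¬ treeDepth f v = 1)).card : ℝ) * PP d k Y := by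
    rw [Finset.sum_congr rfl (fun m hm => ?_), Finset.sum_const, nsmul_eq_mul]
    have hm' : 1 ≤ m ∧ m ≤ n - 1 ∧ ¬ treeDepth f m = 1 := by
      simpa [Finset.mem_filter, Finset.mem_Icc, and_assoc] using hm
    have hfun : (fun i => levelOneDegCount (Function.update f n m) (n+1) i) = Y :=
      funext (lev_update_other f n m hn (by omega) hm'.1 hm'.2.2)
    rw [hfun]
  rw [hother]
  -- level-1 vertices: rewrite via Zvec
  have hlvl1 : ∑ m ∈ B, PP d k (fun i => levelOneDegCount (Function.update f n m) (n+1) i)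
      = ∑ m ∈ B, PP d k (Zvec Y (treeDeg f (n-1) m)) := by
    apply Finset.sum_congr rfl
    intro m hm
    have hm' : 1 ≤ m ∧ m ≤ n - 1 ∧ treeDepth f m = 1 := by
      simpa [hB, Finset.mem_filter, Finset.mem_Icc, and_assoc] using hm
    have hfun : (fun i => levelOneDegCount (Function.update f n m) (n+1) i)
        = Zvec Y (treeDeg f (n-1) m) := by
      funext i
      have := lev_update_lvl1 f n m hn (by omega) hm'.1 hm'.2.2 i
      unfold Zvec
      simp only [hY] at *
      omega
    rw [hfun]
  rw [hlvl1]
  -- fiber by degree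
  have hmaps : ∀ m ∈ B, treeDeg f (n-1) m ∈ Finset.Icc 1 (n+d) := by
    intro m hm
    have hm' : 1 ≤ m ∧ m ≤ n - 1 ∧ treeDepth f m = 1 := by
      simpa [hB, Finset.mem_filter, Finset.mem_Icc, and_assoc] using hm
    simp only [Finset.mem_Icc]
    have h1 := treeDeg_pos f (n-1) m hm'.1
    have h2 := treeDeg_le f (n-1) m
    omega
  have hfiber : ∑ m ∈ B, PP d k (Zvec Y (treeDeg f (n-1) m))
      = ∑ D ∈ Finset.Icc 1 (n+d), (Y D : ℝ) * PP d k (Zvec Y D) := by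
    rw [← Finset.sum_fiberwise_of_maps_to hmaps
      (fun m => PP d k (Zvec Y (treeDeg f (n-1) m)))]
    apply Finset.sum_congr rfl
    intro D hD
    have hcard : (B.filter (fun m => treeDeg f (n-1) m = D)).card = Y D := by
      rw [hB, Finset.filter_filter, hY]
      rfl
    rw [Finset.sum_congr rfl (fun m hm => ?_), Finset.sum_const, nsmul_eq_mul, hcard]
    have : treeDeg f (n-1) m = D := (Finset.mem_filter.mp hm).2
    rw [this]
  rw [hfiber]
  -- cardinalities
  have hcardB : (B.card : ℝ) = ∑ D ∈ Finset.Icc 1 (n+d), (Y D : ℝ) := by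
    have h1 : B.card = ∑ D ∈ Finset.Icc 1 (n+d), (B.filter (fun m => treeDeg f (n-1) m = D)).card := by
      rw [Finset.card_eq_sum_ones B, ← Finset.sum_fiberwise_of_maps_to hmaps (fun _ => (1:ℕ))]
      exact Finset.sum_congr rfl (fun D _ => (Finset.card_eq_sum_ones _).symm)
    have h2 : ∀ D, (B.filter (fun m => treeDeg f (n-1) m = D)).card = Y D := by
      intro D
      rw [hB, Finset.filter_filter, hY]
      rfl
    rw [h1]
    push_cast
    exact Finset.sum_congr rfl (fun D _ => by rw [h2])
  have hcardOther : ((Finset.Icc 1 (n-1)).filter (fun v => ¬ treeDepth f v = 1)).card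
      = (n - 1) - B.card := by
    have h := Finset.card_filter_add_card_filter_not
      (s := Finset.Icc 1 (n-1)) (p := fun v => treeDepth f v = 1)
    have h' : B.card + ((Finset.Icc 1 (n-1)).filter (fun v => ¬ treeDepth f v = 1)).card
        = (Finset.Icc 1 (n-1)).card := by
      rw [hB]
      convert h using 3
    rw [Nat.card_Icc] at h'
    omega
  have hBle : B.card ≤ n - 1 := by
    rw [hB]
    calc ((Finset.Icc 1 (n-1)).filter _).card ≤ (Finset.Icc 1 (n-1)).card :=
          Finset.card_filter_le _ _
      _ = n - 1 := by rw [Nat.card_Icc]; omega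
  rw [hcardOther]
  have := algsum n d hn hd k Y B.card hcardB hBle
  push_cast at this ⊢
  linarith [this]

lemma PP_abs_le (d : ℕ) (κ c : ℕ → ℕ) (N : ℕ) (hc : ∀ i, c i ≤ N) :
    |PP d κ c| ≤ ∏ i ∈ Finset.Icc 1 d, ((N:ℝ) + κ i)^(κ i) := by
  rw [PP, Finset.abs_prod]
  apply Finset.prod_le_prod (fun i _ => abs_nonneg _)
  intro i _
  calc |(descPochhammer ℝ (κ i)).eval ((c i : ℕ) : ℝ)|
      ≤ (|((c i : ℕ) : ℝ)| + κ i)^(κ i) := desc_abs_le _ _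
    _ ≤ ((N:ℝ) + κ i)^(κ i) := by
        apply pow_le_pow_left₀ (by positivity)
        rw [abs_of_nonneg (by positivity)]
        have : ((c i : ℕ) : ℝ) ≤ (N : ℝ) := by exact_mod_cast hc i
        linarith

lemma meas_phi {Ω : Type*} [MeasurableSpace Ω] (F : ℕ → Ω → ℕ)
    (hmeas : ∀ j, Measurable (F j)) (Φ : (ℕ → ℕ) → ℝ) (N : ℕ)
    (hdep : ∀ f g : ℕ → ℕ, (∀ j, j < N → f j = g j) → Φ f = Φ g) :
    Measurable fun ω => Φ (fun j => F j ω) := by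
  have heq : (fun ω => Φ (fun j => F j ω))
      = (fun v : Fin N → ℕ => Φ (fun j => if h : j < N then v ⟨j, h⟩ else 0))
        ∘ (fun ω => fun j : Fin N => F j ω) := by
    funext ω
    exact hdep _ _ (fun j hj => by simp [hj])
  rw [heq]
  exact (measurable_of_countable _).comp (measurable_pi_lambda _ (fun j => hmeas j))

lemma integrable_of_bounded {Ω : Type*} [MeasurableSpace Ω] (μ : Measure Ω)
    [IsProbabilityMeasure μ] {g : Ω → ℝ} (hg : Measurable g) (C : ℝ)
    (hb : ∀ ω, |g ω| ≤ C) : Integrable g μ :=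
  Integrable.mono' (integrable_const C) hg.aestronglyMeasurable (Filter.Eventually.of_forall hb)

theorem jointFactMoment_recursion {Ω : Type*} [MeasurableSpace Ω] (μ : Measure Ω) [IsProbabilityMeasure μ]
    (F : ℕ → Ω → ℕ) (hmeas : ∀ j, Measurable (F j))
    (hlt : ∀ j, 1 ≤ j → ∀ ω, F j ω < j)
    (hunif : ∀ j, 1 ≤ j → ∀ m, m < j → μ {ω | F j ω = m} = ENNReal.ofReal (1 / j))
    (hindep : iIndepFun F μ)
    (n d : ℕ) (hn : 1 ≤ n) (hd : 1 ≤ d) (k : ℕ → ℕ) (K : ℕ)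
    (hK : K = ∑ i ∈ Finset.Icc 1 d, k i) :
    (descPochhammer ℝ K).eval (n : ℝ) *
        jointFactMoment μ F (n + 1) d k =
      (descPochhammer ℝ K).eval ((n : ℝ) - 1) *
          jointFactMoment μ F n d k +
        (descPochhammer ℝ (K - 1)).eval ((n : ℝ) - 1) *
          ∑ j ∈ Finset.Icc 1 d, (k j : ℝ) *
            jointFactMoment μ F n d
              (Function.update (Function.update k j (k j - 1)) (j - 1) (k (j - 1) + 1)) := by
  classical
  set H : ℕ → Ω → ℝ := fun m ω =>
    PP d k (fun i => levelOneDegCount (Function.update (fun j => F j ω) n m) (n+1) i) with hH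
  set Chi : ℕ → Ω → ℝ := fun m ω => if F n ω = m then (1:ℝ) else 0 with hChi
  have hHdep : ∀ m, ∀ f g : ℕ → ℕ, (∀ j, j < n → f j = g j) →
      PP d k (fun i => levelOneDegCount (Function.update f n m) (n+1) i)
        = PP d k (fun i => levelOneDegCount (Function.update g n m) (n+1) i) := by
    intro m f g hfg
    have : ∀ i, levelOneDegCount (Function.update f n m) (n+1) i
        = levelOneDegCount (Function.update g n m) (n+1) i := by
      intro i
      apply lev_congr
      intro j hj1 hj2
      rcases eq_or_ne j n with rfl | hne
      · simp
      · rw [Function.update_of_ne hne, Function.update_of_ne hne]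
        exact hfg j (by omega)
    exact congrArg _ (funext this)
  have hHmeas : ∀ m, Measurable (H m) := by
    intro m
    exact meas_phi F hmeas
      (fun f => PP d k (fun i => levelOneDegCount (Function.update f n m) (n+1) i)) n
      (hHdep m)
  set C : ℝ := ∏ i ∈ Finset.Icc 1 d, ((n:ℝ) + k i)^(k i) with hC
  have hHbdd : ∀ m ω, |H m ω| ≤ C := by
    intro m ω
    apply PP_abs_le
    intro i
    have := lev_le (Function.update (fun j => F j ω) n m) (n+1) i
    omega
  have hHint : ∀ m, Integrable (H m) μ :=
    fun m => integrable_of_bounded μ (hHmeas m) C (hHbdd m)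
  have hChiMeas : ∀ m, Measurable (Chi m) := by
    intro m
    exact Measurable.ite ((hmeas n) (measurableSet_singleton m)) measurable_const
      measurable_const
  have hChiBdd : ∀ m ω, |Chi m ω| ≤ 1 := by
    intro m ω
    simp only [hChi]
    split_ifs <;> norm_num
  have hindepCH : ∀ m, IndepFun (Chi m) (H m) μ := by
    intro m
    have hdisj : Disjoint ({n} : Finset ℕ) (Finset.range n) := by
      simp only [Finset.disjoint_left, Finset.mem_singleton, Finset.mem_range]
      omega
    have hIF := hindep.indepFun_finset {n} (Finset.range n) hdisj hmeas
    have hχ : Chi m = (fun v : (↥({n} : Finset ℕ) → ℕ) =>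
        if v ⟨n, by simp⟩ = m then (1:ℝ) else 0)
        ∘ (fun ω (i : ↥({n} : Finset ℕ)) => F i ω) := rfl
    have hHfac : H m = (fun v : (↥(Finset.range n) → ℕ) =>
        PP d k (fun i => levelOneDegCount (Function.update
          (fun j => if h : j ∈ Finset.range n then v ⟨j, h⟩ else 0) n m) (n+1) i))
        ∘ (fun ω (i : ↥(Finset.range n)) => F i ω) := by
      funext ω
      refine hHdep m _ _ (fun j hj => ?_)
      rw [dif_pos (Finset.mem_range.mpr hj)]
    rw [hχ, hHfac]
    exact hIF.comp (measurable_of_countable _) (measurable_of_countable _)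
  have hChiInt : ∀ m, Integrable (Chi m) μ :=
    fun m => integrable_of_bounded μ (hChiMeas m) 1 (hChiBdd m)
  have hChiIntegral : ∀ m, m < n → ∫ ω, Chi m ω ∂μ = 1 / n := by
    intro m hm
    have hA : MeasurableSet {ω | F n ω = m} := (hmeas n) (measurableSet_singleton m)
    have heq : (fun ω => Chi m ω) = Set.indicator {ω | F n ω = m} (fun _ => (1:ℝ)) := by
      funext ω
      by_cases h : F n ω = m <;>
        simp [hChi, Set.indicator_apply, Set.mem_setOf_eq, h]
    rw [heq, MeasureTheory.integral_indicator_const (1:ℝ) hA, measureReal_def, hunif n hn m hm]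
    rw [ENNReal.toReal_ofReal (by positivity)]
    simp
  -- step 1
  have hE1 : jointFactMoment μ F (n+1) d k
      = ∫ ω, ∑ m ∈ Finset.range n, Chi m ω * H m ω ∂μ := by
    unfold jointFactMoment
    apply integral_congr_ae
    apply Filter.Eventually.of_forall
    intro ω
    beta_reduce
    have hFn : F n ω ∈ Finset.range n := Finset.mem_range.mpr (hlt n hn ω)
    rw [Finset.sum_eq_single (F n ω)]
    · simp only [hChi, hH, if_pos rfl, one_mul]
      have hupd : Function.update (fun j => F j ω) n (F n ω) = fun j => F j ω :=
        Function.update_eq_self n _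
      rw [hupd]
      rfl
    · intro m _ hne
      simp only [hChi]
      rw [if_neg (fun h => hne h.symm)]
      exact zero_mul _
    · intro h
      exact absurd hFn h
  -- steps 2,3
  have hE2 : jointFactMoment μ F (n+1) d k
      = ∑ m ∈ Finset.range n, (1/(n:ℝ)) * ∫ ω, H m ω ∂μ := by
    rw [hE1, integral_finset_sum]
    · apply Finset.sum_congr rfl
      intro m hm
      have hmul : ∫ ω, Chi m ω * H m ω ∂μ = (∫ ω, Chi m ω ∂μ) * ∫ ω, H m ω ∂μ :=
        (hindepCH m).integral_fun_mul_eq_mul_integral (hChiInt m).aestronglyMeasurable (hHint m).aestronglyMeasurable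
      rw [hmul, hChiIntegral m (Finset.mem_range.mp hm)]
    · intro m _
      apply integrable_of_bounded μ ((hChiMeas m).mul (hHmeas m)) C
      intro ω
      rw [Pi.mul_apply, abs_mul]
      calc |Chi m ω| * |H m ω| ≤ 1 * C :=
            mul_le_mul (hChiBdd m ω) (hHbdd m ω) (abs_nonneg _) zero_le_one
        _ = C := one_mul C
  have hE3 : (n:ℝ) * jointFactMoment μ F (n+1) d k
      = ∫ ω, ∑ m ∈ Finset.range n, H m ω ∂μ := by
    rw [hE2, Finset.mul_sum, integral_finset_sum _ (fun m _ => hHint m)]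
    apply Finset.sum_congr rfl
    intro m _
    rw [← mul_assoc]
    have hne : (n:ℝ) ≠ 0 := by positivity
    field_simp
  -- pointwise sum
  have hmain : (n:ℝ) * jointFactMoment μ F (n+1) d k
      = ((n:ℝ) - (K:ℝ)) * jointFactMoment μ F n d k
        + ∑ j ∈ Finset.Icc 1 d, (k j : ℝ) * jointFactMoment μ F n d (kshift k j) := by
    rw [hE3]
    have hptw : ∀ ω, ∑ m ∈ Finset.range n, H m ω
        = ((n:ℝ) - (K:ℝ)) * PP d k (levelOneDegCount (fun j => F j ω) n)
          + ∑ j ∈ Finset.Icc 1 d, (k j : ℝ)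
              * PP d (kshift k j) (levelOneDegCount (fun j => F j ω) n) := by
      intro ω
      simp only [hH]
      rw [pointwise_sum (fun j => F j ω) n d hn hd k, hK]
    rw [integral_congr_ae (Filter.Eventually.of_forall hptw)]
    have hmeasP : ∀ κ : ℕ → ℕ, Measurable (fun ω => PP d κ (levelOneDegCount (fun j => F j ω) n)) := by
      intro κ
      apply meas_phi F hmeas (fun f => PP d κ (levelOneDegCount f n)) n
      intro f g hfg
      exact congrArg _ (funext fun i => lev_congr f g n i (fun j h1 h2 => hfg j (by omega)))
    have hintP : ∀ κ : ℕ → ℕ, Integrable (fun ω => PP d κ (levelOneDegCount (fun j => F j ω) n)) μ := by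
      intro κ
      apply integrable_of_bounded μ (hmeasP κ) (∏ i ∈ Finset.Icc 1 d, ((n:ℝ) + κ i)^(κ i))
      intro ω
      apply PP_abs_le
      intro i
      have := lev_le (fun j => F j ω) n i
      omega
    rw [integral_add ((hintP k).const_mul _) (integrable_finset_sum _
      (fun j _ => (hintP (kshift k j)).const_mul _))]
    rw [integral_const_mul, integral_finset_sum _ (fun j _ => (hintP (kshift k j)).const_mul _)]
    have hjE : ∀ κ : ℕ → ℕ, (∫ ω, PP d κ (levelOneDegCount (fun j => F j ω) n) ∂μ)
        = jointFactMoment μ F n d κ := fun κ => rfl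
    rw [hjE k]
    congr 1
    apply Finset.sum_congr rfl
    intro j _
    rw [integral_const_mul, hjE (kshift k j)]
  -- final assembly
  have hkshift : ∀ j, Function.update (Function.update k j (k j - 1)) (j - 1) (k (j - 1) + 1)
      = kshift k j := fun j => rfl
  simp only [hkshift]
  have hne : (n:ℝ) ≠ 0 := by positivity
  cases K with
  | zero =>
    have hk0 : ∀ i ∈ Finset.Icc 1 d, k i = 0 :=
      fun i hi => Finset.sum_eq_zero_iff.mp hK.symm i hi
    have hS0 : ∑ j ∈ Finset.Icc 1 d, (k j : ℝ) * jointFactMoment μ F n d (kshift k j) = 0 :=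
      Finset.sum_eq_zero (fun j hj => by rw [hk0 j hj]; simp)
    rw [hS0] at hmain
    have hEE : jointFactMoment μ F (n+1) d k = jointFactMoment μ F n d k := by
      have : (n:ℝ) * jointFactMoment μ F (n+1) d k = (n:ℝ) * jointFactMoment μ F n d k := by
        rw [hmain]; push_cast; ring
      exact mul_left_cancel₀ hne this
    rw [hS0, hEE]
    simp [descPochhammer_zero]
  | succ K' =>
    have hA := desc_succ_left_eval K' (n:ℝ)
    have hB := desc_succ_right K' ((n:ℝ) - 1)
    rw [hA, hB, Nat.add_sub_cancel]
    push_cast at hmain ⊢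
    linear_combination ((descPochhammer ℝ K').eval ((n:ℝ)-1)) * hmain
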